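/- Fix t, C > 0, π ≥ 1, and G(x, a) as the parametric optimum defined from concave increasing revenue functions g̃_τ with linear packing constraints (total capacity x, current-slot rate a, fixed past rates). Let f(x) = (1/(πC))·e^(x/(πC))/(e^(1/π)−1) and Ψ(a) = f(C)·G(C, a) − (1/(πC))·∫₀^C G(x, a)·f(x) dx. Then Ψ(a) = ∫₀^C f(x)·∂G(x,a)/∂x dx wherever the partial derivative exists, and Ψ is nondecreasing in a. -/

import Mathlib

private lemma concave_exchange {g : ℝ → ℝ} (hg : ConcaveOn ℝ (Set.Ici 0) g)
    {m M p : ℝ} (hm : 0 ≤ m) (hmp : m ≤ p) (hpM : p ≤ M) :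
    g m + g M ≤ g p + g (m + M - p) := by
  rcases eq_or_lt_of_le (hmp.trans hpM) with h | h
  · have hpm : p = m := le_antisymm (h ▸ hpM) hmp
    have hq : m + M - p = M := by rw [hpm]; ring
    rw [hq, hpm]
  · set θ := (p - m) / (M - m) with hθ
    have hMm : 0 < M - m := sub_pos.2 h
    have hθ0 : 0 ≤ θ := div_nonneg (by linarith) hMm.le
    have hθ1 : θ ≤ 1 := (div_le_one hMm).2 (by linarith)
    have hmM : m ∈ Set.Ici (0:ℝ) := hm
    have hMM : M ∈ Set.Ici (0:ℝ) := le_trans hm (hmp.trans hpM)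
    have h' : θ * (M - m) = p - m := div_mul_cancel₀ _ hMm.ne'
    have e1 : (1 - θ) • m + θ • M = p := by
      simp only [smul_eq_mul]; linear_combination h'
    have e2 : θ • m + (1 - θ) • M = m + M - p := by
      simp only [smul_eq_mul]; linear_combination -h'
    have k1 := hg.2 hmM hMM (by linarith : (0:ℝ) ≤ 1 - θ) hθ0 (by ring)
    have k2 := hg.2 hmM hMM hθ0 (by linarith : (0:ℝ) ≤ 1 - θ) (by ring)
    rw [e1] at k1
    rw [e2] at k2
    simp only [smul_eq_mul] at k1 k2
    linarith

private lemma super_G (t : ℕ) (ht : 1 ≤ t) (ahat : ℕ → ℝ) (gt : ℕ → ℝ → ℝ)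
    (hconc : ∀ τ ∈ Finset.Icc 1 t, ConcaveOn ℝ (Set.Ici 0) (gt τ))
    (G : ℝ → ℝ → ℝ)
    (hG : ∀ x a : ℝ, 0 ≤ x → 0 ≤ a →
      IsGreatest {y : ℝ | ∃ v : ℕ → ℝ,
        (∀ τ ∈ Finset.Icc 1 t, 0 ≤ v τ) ∧
        (∑ τ ∈ Finset.Icc 1 t, v τ) ≤ x ∧
        v t ≤ a ∧
        (∀ τ ∈ Finset.Icc 1 (t - 1), v τ ≤ ahat τ) ∧
        y = ∑ τ ∈ Finset.Icc 1 t, gt τ (v τ)} (G x a))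
    {x1 x2 a1 a2 : ℝ} (hx1 : 0 ≤ x1) (hx12 : x1 ≤ x2) (ha1 : 0 ≤ a1) (ha12 : a1 ≤ a2) :
    G x1 a2 + G x2 a1 ≤ G x1 a1 + G x2 a2 := by
  have hx2 : 0 ≤ x2 := hx1.trans hx12
  have ha2 : 0 ≤ a2 := ha1.trans ha12
  obtain ⟨u, hu0, husum, hut, huhat, huval⟩ := (hG x1 a2 hx1 ha2).1
  obtain ⟨w, hw0, hwsum, hwt, hwhat, hwval⟩ := (hG x2 a1 hx2 ha1).1
  have htmem : t ∈ Finset.Icc 1 t := Finset.mem_Icc.mpr ⟨ht, le_rfl⟩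
  have hnott : ∀ τ ∈ Finset.Icc 1 (t - 1), τ ≠ t := by
    intro τ hτ
    have := (Finset.mem_Icc.mp hτ).2
    omega
  set l : ℕ → ℝ := fun τ => if τ = t then max (min (u t) (w t)) (u t + w t - a2)
      else min (u τ) (w τ) with hldef
  set r : ℕ → ℝ := fun τ => if τ = t then min a1 (max (u t) (w t))
      else max (u τ) (w τ) with hrdef
  have hlt : l t = max (min (u t) (w t)) (u t + w t - a2) := by simp [hldef]
  have hrt : r t = min a1 (max (u t) (w t)) := by simp [hrdef]
  have hlne : ∀ τ, τ ≠ t → l τ = min (u τ) (w τ) := by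
    intro τ h; simp [hldef, h]
  have hrne : ∀ τ, τ ≠ t → r τ = max (u τ) (w τ) := by
    intro τ h; simp [hrdef, h]
  have hminl : ∀ τ, min (u τ) (w τ) ≤ l τ := by
    intro τ; by_cases h : τ = t
    · rw [h, hlt]; exact le_max_left _ _
    · rw [hlne τ h]
  have hrmax : ∀ τ, r τ ≤ max (u τ) (w τ) := by
    intro τ; by_cases h : τ = t
    · rw [h, hrt]; exact min_le_right _ _
    · rw [hrne τ h]
  have hlu : ∀ τ ∈ Finset.Icc 1 t, l τ ≤ u τ := by
    intro τ _; by_cases h : τ = t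
    · rw [h, hlt]; exact max_le (min_le_left _ _) (by linarith)
    · rw [hlne τ h]; exact min_le_left _ _
  have hwr : ∀ τ ∈ Finset.Icc 1 t, w τ ≤ r τ := by
    intro τ _; by_cases h : τ = t
    · rw [h, hrt]; exact le_min hwt (le_max_right _ _)
    · rw [hrne τ h]; exact le_max_right _ _
  have hlr : ∀ τ, l τ ≤ r τ := by
    intro τ; by_cases h : τ = t
    · rw [h, hlt, hrt]
      refine max_le (le_min ((min_le_right _ _).trans hwt) (min_le_max)) ?_
      refine le_min (by linarith) ?_
      have huw : u t + w t - a2 ≤ u t := by linarith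
      exact huw.trans (le_max_left _ _)
    · rw [hlne τ h, hrne τ h]; exact min_le_max
  have hl0 : ∀ τ ∈ Finset.Icc 1 t, 0 ≤ l τ := fun τ hτ =>
    le_trans (le_min (hu0 τ hτ) (hw0 τ hτ)) (hminl τ)
  set Sl := ∑ τ ∈ Finset.Icc 1 t, l τ with hSlE
  set Sr := ∑ τ ∈ Finset.Icc 1 t, r τ with hSrE
  set Su := ∑ τ ∈ Finset.Icc 1 t, u τ with hSuE
  set Sw := ∑ τ ∈ Finset.Icc 1 t, w τ with hSwE
  have hSlu : Sl ≤ Su := Finset.sum_le_sum hlu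
  have hSwr : Sw ≤ Sr := Finset.sum_le_sum hwr
  have hSlr : Sl ≤ Sr := Finset.sum_le_sum (fun τ _ => hlr τ)
  set T := max (Su + Sw - x2) Sl with hTdef
  have hT1 : Sl ≤ T := le_max_right _ _
  have hT2 : T ≤ x1 := max_le (by linarith) (hSlu.trans husum)
  have hT3 : Su + Sw - x2 ≤ T := le_max_left _ _
  have hT4 : T ≤ Sr := max_le (by linarith) hSlr
  set θ := if Sr - Sl = 0 then (0:ℝ) else (T - Sl) / (Sr - Sl) with hθdef
  have hθ0 : 0 ≤ θ := by
    rw [hθdef]; split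
    · exact le_rfl
    · exact div_nonneg (by linarith) (by linarith)
  have hθ1 : θ ≤ 1 := by
    rw [hθdef]; split
    · exact zero_le_one
    · next h => exact (div_le_one (lt_of_le_of_ne (by linarith) (Ne.symm h))).2 (by linarith)
  have hθS : θ * (Sr - Sl) = T - Sl := by
    rw [hθdef]; split
    · next h =>
      have hT : T = Sl := le_antisymm (by linarith) hT1
      simp [h, hT]
    · next h => exact div_mul_cancel₀ _ h
  set p : ℕ → ℝ := fun τ => l τ + θ * (r τ - l τ) with hpdef
  have hpl : ∀ τ, l τ ≤ p τ := by
    intro τ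
    have := mul_nonneg hθ0 (sub_nonneg.2 (hlr τ))
    simp only [hpdef]; linarith
  have hpr : ∀ τ, p τ ≤ r τ := by
    intro τ
    have h1 : θ * (r τ - l τ) ≤ 1 * (r τ - l τ) :=
      mul_le_mul_of_nonneg_right hθ1 (sub_nonneg.2 (hlr τ))
    simp only [hpdef]; linarith
  have hSp : ∑ τ ∈ Finset.Icc 1 t, p τ = T := by
    simp only [hpdef]
    rw [Finset.sum_add_distrib, ← Finset.mul_sum, Finset.sum_sub_distrib, ← hSlE, ← hSrE]
    linarith [hθS]
  set q : ℕ → ℝ := fun τ => u τ + w τ - p τ with hqdef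
  have hminmax : ∀ τ, min (u τ) (w τ) + max (u τ) (w τ) = u τ + w τ := fun τ => min_add_max _ _
  have hq_ge : ∀ τ, min (u τ) (w τ) ≤ q τ := by
    intro τ
    have h1 := hpr τ; have h2 := hrmax τ; have h3 := hminmax τ
    simp only [hqdef]; linarith
  have hq_le : ∀ τ, q τ ≤ max (u τ) (w τ) := by
    intro τ
    have h1 := hpl τ; have h2 := hminl τ; have h3 := hminmax τ
    simp only [hqdef]; linarith
  have hpmem : (∑ τ ∈ Finset.Icc 1 t, gt τ (p τ)) ≤ G x1 a1 := by
    apply (hG x1 a1 hx1 ha1).2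
    refine ⟨p, ?_, ?_, ?_, ?_, rfl⟩
    · intro τ hτ; exact le_trans (hl0 τ hτ) (hpl τ)
    · rw [hSp]; exact hT2
    · have h1 := hpr t
      have hrta : r t ≤ a1 := by rw [hrt]; exact min_le_left _ _
      linarith
    · intro τ hτ
      have h1 := hpr τ
      rw [hrne τ (hnott τ hτ)] at h1
      exact h1.trans (max_le (huhat τ hτ) (hwhat τ hτ))
  have hqmem : (∑ τ ∈ Finset.Icc 1 t, gt τ (q τ)) ≤ G x2 a2 := by
    apply (hG x2 a2 hx2 ha2).2
    refine ⟨q, ?_, ?_, ?_, ?_, rfl⟩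
    · intro τ hτ; exact le_trans (le_min (hu0 τ hτ) (hw0 τ hτ)) (hq_ge τ)
    · have hq : ∑ τ ∈ Finset.Icc 1 t, q τ = Su + Sw - T := by
        simp only [hqdef]
        rw [Finset.sum_sub_distrib, Finset.sum_add_distrib, hSp, ← hSuE, ← hSwE]
      rw [hq]; linarith
    · have h1 := hpl t
      have h2 : u t + w t - a2 ≤ l t := by
        rw [hlt]; exact le_max_right _ _
      simp only [hqdef]; linarith
    · intro τ hτ
      exact (hq_le τ).trans (max_le (huhat τ hτ) (hwhat τ hτ))
  have hval : (∑ τ ∈ Finset.Icc 1 t, gt τ (u τ)) + (∑ τ ∈ Finset.Icc 1 t, gt τ (w τ))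
      ≤ (∑ τ ∈ Finset.Icc 1 t, gt τ (p τ)) + (∑ τ ∈ Finset.Icc 1 t, gt τ (q τ)) := by
    rw [← Finset.sum_add_distrib, ← Finset.sum_add_distrib]
    apply Finset.sum_le_sum
    intro τ hτ
    have hmm : (0:ℝ) ≤ min (u τ) (w τ) := le_min (hu0 τ hτ) (hw0 τ hτ)
    have hqτ : q τ = min (u τ) (w τ) + max (u τ) (w τ) - p τ := by
      simp only [hqdef]; rw [min_add_max]
    rw [hqτ]
    have hexch := concave_exchange (hconc τ hτ) hmm ((hminl τ).trans (hpl τ))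
      ((hpr τ).trans (hrmax τ))
    have huw : gt τ (min (u τ) (w τ)) + gt τ (max (u τ) (w τ)) = gt τ (u τ) + gt τ (w τ) := by
      rcases le_total (u τ) (w τ) with h | h
      · rw [min_eq_left h, max_eq_right h]
      · rw [min_eq_right h, max_eq_left h]; ring
    linarith
  rw [huval, hwval]
  linarith
theorem stmt_13 (t : ℕ) (ht : 1 ≤ t) (C π : ℝ) (hC : 0 < C) (hπ : 1 ≤ π)
    (ahat : ℕ → ℝ) (hahat : ∀ τ ∈ Finset.Icc 1 (t - 1), 0 ≤ ahat τ)
    (gt : ℕ → ℝ → ℝ)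
    (hconc : ∀ τ ∈ Finset.Icc 1 t, ConcaveOn ℝ (Set.Ici 0) (gt τ))
    (hmono : ∀ τ ∈ Finset.Icc 1 t, StrictMonoOn (gt τ) (Set.Ici 0))
    (hg0 : ∀ τ ∈ Finset.Icc 1 t, gt τ 0 = 0)
    (G : ℝ → ℝ → ℝ)
    (hG : ∀ x a : ℝ, 0 ≤ x → 0 ≤ a →
      IsGreatest {y : ℝ | ∃ v : ℕ → ℝ,
        (∀ τ ∈ Finset.Icc 1 t, 0 ≤ v τ) ∧
        (∑ τ ∈ Finset.Icc 1 t, v τ) ≤ x ∧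
        v t ≤ a ∧
        (∀ τ ∈ Finset.Icc 1 (t - 1), v τ ≤ ahat τ) ∧
        y = ∑ τ ∈ Finset.Icc 1 t, gt τ (v τ)} (G x a))
    (f : ℝ → ℝ)
    (hf : ∀ x : ℝ, f x = (1 / (π * C)) * Real.exp (x / (π * C)) / (Real.exp (1 / π) - 1))
    (Ψ : ℝ → ℝ)
    (hΨ : ∀ a : ℝ, Ψ a = f C * G C a - (1 / (π * C)) * ∫ x in (0:ℝ)..C, G x a * f x) :
    (∀ a : ℝ, 0 ≤ a → ∀ G' : ℝ → ℝ,
      (∀ x ∈ Set.Icc (0:ℝ) C, HasDerivWithinAt (fun x => G x a) (G' x) (Set.Icc 0 C) x) →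
      Ψ a = ∫ x in (0:ℝ)..C, f x * G' x) ∧
    MonotoneOn Ψ (Set.Ici 0) := by
  have hπ0 : (0:ℝ) < π := lt_of_lt_of_le one_pos hπ
  have hc : (0:ℝ) < π * C := mul_pos hπ0 hC
  have hE : (0:ℝ) < Real.exp (1 / π) - 1 := by
    have h1 : (0:ℝ) < 1 / π := by positivity
    have h2 : (1:ℝ) < Real.exp (1 / π) := by
      calc (1:ℝ) = Real.exp 0 := Real.exp_zero.symm
        _ < Real.exp (1 / π) := Real.exp_lt_exp.2 h1
    linarith
  have hCc : C / (π * C) = 1 / π := by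
    rw [div_eq_div_iff hc.ne' hπ0.ne']; ring
  -- basic facts about f
  have hfeq : f = fun x => 1 / (π * C) * Real.exp (x / (π * C)) / (Real.exp (1 / π) - 1) :=
    funext hf
  have hfpos : ∀ x : ℝ, 0 < f x := by
    intro x; rw [hf x]
    exact div_pos (mul_pos (by positivity) (Real.exp_pos _)) hE
  have hfcont : Continuous f := by
    rw [hfeq]
    exact (continuous_const.mul ((continuous_id.div_const (π * C)).rexp)).div_const _
  have hfd : ∀ x : ℝ, HasDerivAt f (f x * (π * C)⁻¹) x := by
    intro x
    have h1 : HasDerivAt (fun y : ℝ => y / (π * C)) ((π * C)⁻¹) x := by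
      simpa [one_div] using (hasDerivAt_id x).div_const (π * C)
    have h2 := ((h1.exp.const_mul (1 / (π * C))).div_const (Real.exp (1 / π) - 1))
    rw [hfeq]
    exact h2.congr_deriv (by ring)
  have hfint1 : (∫ x in (0:ℝ)..C, f x) = 1 := by
    have hF : ∀ x ∈ Set.uIcc (0:ℝ) C,
        HasDerivAt (fun y => Real.exp (y / (π * C)) / (Real.exp (1 / π) - 1)) (f x) x := by
      intro x _
      have h1 : HasDerivAt (fun y : ℝ => y / (π * C)) ((π * C)⁻¹) x := by
        simpa [one_div] using (hasDerivAt_id x).div_const (π * C)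
      have h2 := h1.exp.div_const (Real.exp (1 / π) - 1)
      exact h2.congr_deriv (by rw [hf x]; ring)
    rw [intervalIntegral.integral_eq_sub_of_hasDerivAt hF (hfcont.intervalIntegrable 0 C)]
    rw [hCc]
    have h0 : (0:ℝ) / (π * C) = 0 := zero_div _
    rw [h0, Real.exp_zero, div_sub_div_same, div_self hE.ne']
  -- basic facts about G
  have hmonox : ∀ a : ℝ, 0 ≤ a → ∀ x y : ℝ, 0 ≤ x → x ≤ y → G x a ≤ G y a := by
    intro a ha x y hx hxy
    obtain ⟨v, h1, h2, h3, h4, h5⟩ := (hG x a hx ha).1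
    exact (hG y a (hx.trans hxy) ha).2 ⟨v, h1, h2.trans hxy, h3, h4, h5⟩
  have hmonoa : ∀ x : ℝ, 0 ≤ x → ∀ a b : ℝ, 0 ≤ a → a ≤ b → G x a ≤ G x b := by
    intro x hx a b ha hab
    obtain ⟨v, h1, h2, h3, h4, h5⟩ := (hG x a hx ha).1
    exact (hG x b hx (ha.trans hab)).2 ⟨v, h1, h2, h3.trans hab, h4, h5⟩
  have hG0 : ∀ a : ℝ, 0 ≤ a → G 0 a = 0 := by
    intro a ha
    obtain ⟨v, h1, h2, h3, h4, h5⟩ := (hG 0 a le_rfl ha).1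
    have hsum0 : ∑ τ ∈ Finset.Icc 1 t, v τ = 0 := le_antisymm h2 (Finset.sum_nonneg h1)
    rw [h5]
    apply Finset.sum_eq_zero
    intro τ hτ
    rw [(Finset.sum_eq_zero_iff_of_nonneg h1).1 hsum0 τ hτ]
    exact hg0 τ hτ
  have hGconc : ∀ a : ℝ, 0 ≤ a → ConcaveOn ℝ (Set.Ici 0) (fun x => G x a) := by
    intro a ha
    refine ⟨convex_Ici 0, ?_⟩
    intro x hx y hy s r hs hr hsr
    obtain ⟨v1, h11, h12, h13, h14, h15⟩ := (hG x a hx ha).1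
    obtain ⟨v2, h21, h22, h23, h24, h25⟩ := (hG y a hy ha).1
    simp only [smul_eq_mul] at *
    have hcomb0 : (0:ℝ) ≤ s * x + r * y :=
      add_nonneg (mul_nonneg hs hx) (mul_nonneg hr hy)
    have hmem : (∑ τ ∈ Finset.Icc 1 t, gt τ (s * v1 τ + r * v2 τ)) ≤ G (s * x + r * y) a := by
      apply (hG (s * x + r * y) a hcomb0 ha).2
      refine ⟨fun τ => s * v1 τ + r * v2 τ, ?_, ?_, ?_, ?_, rfl⟩
      · intro τ hτ
        exact add_nonneg (mul_nonneg hs (h11 τ hτ)) (mul_nonneg hr (h21 τ hτ))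
      · rw [Finset.sum_add_distrib, ← Finset.mul_sum, ← Finset.mul_sum]
        exact add_le_add (mul_le_mul_of_nonneg_left h12 hs)
          (mul_le_mul_of_nonneg_left h22 hr)
      · calc s * v1 t + r * v2 t ≤ s * a + r * a :=
              add_le_add (mul_le_mul_of_nonneg_left h13 hs)
                (mul_le_mul_of_nonneg_left h23 hr)
          _ = a := by rw [← add_mul, hsr, one_mul]
      · intro τ hτ
        calc s * v1 τ + r * v2 τ ≤ s * ahat τ + r * ahat τ :=
              add_le_add (mul_le_mul_of_nonneg_left (h14 τ hτ) hs)
                (mul_le_mul_of_nonneg_left (h24 τ hτ) hr)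
          _ = ahat τ := by rw [← add_mul, hsr, one_mul]
    refine le_trans ?_ hmem
    rw [h15, h25, Finset.mul_sum, Finset.mul_sum, ← Finset.sum_add_distrib]
    apply Finset.sum_le_sum
    intro τ hτ
    have := (hconc τ hτ).2 (h11 τ hτ) (h21 τ hτ) hs hr hsr
    simpa [smul_eq_mul] using this
  -- integrability of G in x
  have hGaint : ∀ a : ℝ, 0 ≤ a → IntervalIntegrable (fun x => G x a) MeasureTheory.volume 0 C := by
    intro a ha
    apply MonotoneOn.intervalIntegrable
    rw [Set.uIcc_of_le hC.le]
    intro x hx y hy hxy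
    exact hmonox a ha x y hx.1 hxy
  have hGfint : ∀ a : ℝ, 0 ≤ a →
      IntervalIntegrable (fun x => G x a * f x) MeasureTheory.volume 0 C := by
    intro a ha
    exact (hGaint a ha).mul_continuousOn hfcont.continuousOn
  constructor
  · -- Part 1
    intro a ha G' hder
    have hGacont : ContinuousOn (fun x => G x a) (Set.Icc 0 C) := fun x hx =>
      (hder x hx).continuousWithinAt
    have hconcIcc : ConcaveOn ℝ (Set.Icc 0 C) (fun x => G x a) :=
      (hGconc a ha).subset (Set.Icc_subset_Ici_self) (convex_Icc 0 C)
    have hG'anti : AntitoneOn G' (Set.Icc 0 C) := by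
      intro x hx y hy hxy
      rcases eq_or_lt_of_le hxy with rfl | hlt
      · exact le_rfl
      · have h1 : G' y ≤ slope (fun x => G x a) x y :=
          hconcIcc.le_slope_of_hasDerivWithinAt hx hy hlt (hder y hy)
        have h2 : slope (fun x => G x a) x y ≤ G' x :=
          hconcIcc.slope_le_of_hasDerivWithinAt hx hy hlt (hder x hx)
        exact h1.trans h2
    have hG'int : IntervalIntegrable G' MeasureTheory.volume 0 C := by
      apply AntitoneOn.intervalIntegrable
      rw [Set.uIcc_of_le hC.le]
      exact hG'anti
    have hfG'int : IntervalIntegrable (fun x => f x * G' x) MeasureTheory.volume 0 C :=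
      hG'int.continuousOn_mul hfcont.continuousOn
    have hfGint' : IntervalIntegrable (fun x => f x * (π * C)⁻¹ * G x a)
        MeasureTheory.volume 0 C :=
      (hGaint a ha).continuousOn_mul ((hfcont.mul continuous_const).continuousOn)
    have key : (∫ x in (0:ℝ)..C, (f x * (π * C)⁻¹ * G x a + f x * G' x))
        = f C * G C a - f 0 * G 0 a := by
      apply intervalIntegral.integral_eq_sub_of_hasDeriv_right_of_le hC.le
      · exact hfcont.continuousOn.mul hGacont
      · intro x hx
        have hGa : HasDerivAt (fun x => G x a) (G' x) x :=
          (hder x (Set.Ioo_subset_Icc_self hx)).hasDerivAt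
            (Icc_mem_nhds hx.1 hx.2)
        exact ((hfd x).mul hGa).hasDerivWithinAt
      · exact hfGint'.add hfG'int
    rw [intervalIntegral.integral_add hfGint' hfG'int] at key
    rw [hG0 a ha, mul_zero, sub_zero] at key
    rw [hΨ a]
    have hrw : (1 / (π * C)) * ∫ x in (0:ℝ)..C, G x a * f x
        = ∫ x in (0:ℝ)..C, f x * (π * C)⁻¹ * G x a := by
      rw [← intervalIntegral.integral_const_mul]
      apply intervalIntegral.integral_congr
      intro x _
      simp only
      ring
    rw [hrw]
    linarith
  · -- Part 2
    intro a1 h1 a2 h2 h12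
    simp only [Set.mem_Ici] at h1 h2
    have hint1 := hGfint a1 h1
    have hint2 := hGfint a2 h2
    have hDC : 0 ≤ G C a2 - G C a1 := sub_nonneg.2 (hmonoa C hC.le a1 a2 h1 h12)
    have hcf : IntervalIntegrable (fun x => (G C a2 - G C a1) * f x)
        MeasureTheory.volume 0 C := (continuous_const.mul hfcont).intervalIntegrable 0 C
    have hmono_int : (∫ x in (0:ℝ)..C, (G x a2 * f x - G x a1 * f x))
        ≤ ∫ x in (0:ℝ)..C, (G C a2 - G C a1) * f x := by
      apply intervalIntegral.integral_mono_on hC.le (hint2.sub hint1) hcf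
      intro x hx
      have hs := super_G t ht ahat gt hconc G hG hx.1 hx.2 h1 h12
      nlinarith [(hfpos x).le]
    rw [intervalIntegral.integral_sub hint2 hint1] at hmono_int
    rw [intervalIntegral.integral_const_mul, hfint1, mul_one] at hmono_int
    rw [hΨ a1, hΨ a2]
    have hfCge : 1 / (π * C) ≤ f C := by
      rw [hf C, hCc, mul_div_assoc]
      nth_rewrite 1 [← mul_one (1 / (π * C))]
      apply mul_le_mul_of_nonneg_left _ (by positivity)
      rw [le_div_iff₀ hE]
      linarith
    have hp1 : (0:ℝ) < 1 / (π * C) := by positivity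
    nlinarith [mul_le_mul_of_nonneg_left hmono_int hp1.le,
      mul_le_mul_of_nonneg_right hfCge hDC]
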